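/- Let ε_1, …, ε_n (n ≥ 2) be mutually independent random vectors in ℝ^p with i.i.d. N(0,σ²) coordinates, let X_1, …, X_n, θ_1, …, θ_n ∈ ℝ^p be fixed vectors, let d_{ij} ≥ 0 (1 ≤ i < j ≤ n) and a ∈ ℝ be constants, and define Δ = Σ_{1 ≤ i < j ≤ n} ( d_{ij} − a ‖X_i + θ_i + ε_i − X_j − θ_j − ε_j‖₂ )². Set A_{ij} = ‖X_i + θ_i + ε_i − X_j − θ_j − ε_j‖₂ and λ_{ij} = ‖X_i + θ_i − X_j − θ_j‖₂/(√2 σ). Then E(Δ) = Σ_{1 ≤ i < j ≤ n} [ d_{ij}² + 2a²σ²(p + λ_{ij}²) − 2 a d_{ij} E(A_{ij}) ]. -/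

import Mathlib

open MeasureTheory ProbabilityTheory

/-- A family of random vectors in `ℝ^p` such that all coordinates (across the whole family)
are mutually independent and each coordinate is Gaussian `N(0, σ²)`. -/
def IIDGaussianCoords {Ω : Type*} [MeasurableSpace Ω] (P : Measure Ω)
    {ι : Type*} {p : ℕ} (σ : ℝ) (ε : ι → Ω → EuclideanSpace ℝ (Fin p)) : Prop :=
  (∀ i, Measurable (ε i)) ∧
  iIndepFun (fun q : ι × Fin p => fun ω => ε q.1 ω q.2) P ∧
  ∀ i k, Measure.map (fun ω => ε i ω k) P = gaussianReal 0 ⟨σ ^ 2, sq_nonneg σ⟩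

open Real Filter
open scoped NNReal ENNReal

section GaussAux


/- Part A : integrals over volume -/

lemma intA1' {b : ℝ} (hb : 0 < b) : Integrable (fun x : ℝ => x * Real.exp (-b * x ^ 2)) := by
  have := integrable_rpow_mul_exp_neg_mul_sq hb (s := 1) (by norm_num)
  simpa [Real.rpow_one] using this

lemma intA2' {b : ℝ} (hb : 0 < b) : Integrable (fun x : ℝ => x ^ 2 * Real.exp (-b * x ^ 2)) := by
  have := integrable_rpow_mul_exp_neg_mul_sq hb (s := 2) (by norm_num)
  have h2 : ∀ x : ℝ, x ^ (2 : ℝ) = x ^ 2 := fun x => by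
    rw [show (2:ℝ) = ((2:ℕ):ℝ) by norm_num, Real.rpow_natCast]
  simpa [h2] using this

lemma valA3' {b : ℝ} (hb : 0 < b) : ∫ x : ℝ, x * Real.exp (-b * x ^ 2) = 0 := by
  have hderiv : ∀ x : ℝ, HasDerivAt (fun y : ℝ => -(2 * b)⁻¹ * Real.exp (-b * y ^ 2))
      (x * Real.exp (-b * x ^ 2)) x := by
    intro x
    have h1 : HasDerivAt (fun y : ℝ => -b * y ^ 2) (-b * (2 * x)) x := by
      simpa using ((hasDerivAt_pow 2 x).const_mul (-b))
    have h2 := (h1.exp).const_mul (-(2 * b)⁻¹)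
    refine h2.congr_deriv ?_
    field_simp
  exact integral_eq_zero_of_hasDerivAt_of_integrable hderiv (intA1' hb)
    (((integrable_exp_neg_mul_sq hb).const_mul _))

lemma valA4' {b : ℝ} (hb : 0 < b) :
    ∫ x : ℝ, x ^ 2 * Real.exp (-b * x ^ 2) = Real.sqrt (π / b) / (2 * b) := by
  set g : ℝ → ℝ := fun x => -(2 * b)⁻¹ * (x * Real.exp (-b * x ^ 2)) with hg
  have hderiv : ∀ x : ℝ, HasDerivAt g
      (x ^ 2 * Real.exp (-b * x ^ 2) - (2 * b)⁻¹ * Real.exp (-b * x ^ 2)) x := by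
    intro x
    have h1 : HasDerivAt (fun y : ℝ => -b * y ^ 2) (-b * (2 * x)) x := by
      simpa using ((hasDerivAt_pow 2 x).const_mul (-b))
    have h2 := ((hasDerivAt_id x).mul h1.exp).const_mul (-(2 * b)⁻¹)
    refine h2.congr_deriv ?_
    simp only [id]
    field_simp
    ring
  have hint : Integrable (fun x : ℝ =>
      x ^ 2 * Real.exp (-b * x ^ 2) - (2 * b)⁻¹ * Real.exp (-b * x ^ 2)) :=
    (intA2' hb).sub ((integrable_exp_neg_mul_sq hb).const_mul _)
  have hzero : ∫ x : ℝ, (x ^ 2 * Real.exp (-b * x ^ 2) - (2 * b)⁻¹ * Real.exp (-b * x ^ 2)) = 0 :=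
    integral_eq_zero_of_hasDerivAt_of_integrable hderiv hint ((intA1' hb).const_mul _)
  have hsub := integral_sub (intA2' hb) ((integrable_exp_neg_mul_sq hb).const_mul ((2 * b)⁻¹))
  rw [hsub] at hzero
  have hgauss : ∫ x : ℝ, Real.exp (-b * x ^ 2) = Real.sqrt (π / b) := integral_gaussian b
  rw [integral_const_mul, hgauss] at hzero
  have : ∫ x : ℝ, x ^ 2 * Real.exp (-b * x ^ 2) = (2 * b)⁻¹ * Real.sqrt (π / b) := by linarith
  rw [this]; ring

/- Part B : gaussian moments -/

lemma pdf_eq' {v : ℝ≥0} : gaussianPDFReal 0 v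
    = fun x => (Real.sqrt (2 * π * v))⁻¹ * Real.exp (-(2 * (v : ℝ))⁻¹ * x ^ 2) := by
  funext x
  rw [gaussianPDFReal]
  congr 1
  rw [sub_zero]
  by_cases h : (v : ℝ) = 0
  · simp [h]
  · field_simp

lemma gauss_int' {v : ℝ≥0} (hv : v ≠ 0) (g : ℝ → ℝ) :
    ∫ x, g x ∂(gaussianReal 0 v) = ∫ x, gaussianPDFReal 0 v x * g x := by
  rw [gaussianReal_of_var_ne_zero _ hv]
  have h : gaussianPDF 0 v = fun x => ((gaussianPDFReal 0 v x).toNNReal : ℝ≥0∞) := rfl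
  rw [h, integral_withDensity_eq_integral_smul ((measurable_gaussianPDFReal 0 v).real_toNNReal) g]
  congr 1; funext x
  simp [NNReal.smul_def, Real.coe_toNNReal _ (gaussianPDFReal_nonneg 0 v x)]

lemma gauss_integrable' {v : ℝ≥0} (hv : v ≠ 0) {g : ℝ → ℝ}
    (hig : Integrable (fun x => gaussianPDFReal 0 v x * g x)) :
    Integrable g (gaussianReal 0 v) := by
  rw [gaussianReal_of_var_ne_zero _ hv, gaussianPDF_def]
  rw [integrable_withDensity_iff ((measurable_gaussianPDFReal 0 v).ennreal_ofReal)
    (ae_of_all _ fun x => ENNReal.ofReal_lt_top)]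
  refine hig.congr (ae_of_all _ fun x => ?_)
  simp only []
  rw [ENNReal.toReal_ofReal (gaussianPDFReal_nonneg 0 v x), mul_comm]

lemma hb_pos' {v : ℝ≥0} (hv : v ≠ 0) : 0 < (2 * (v : ℝ))⁻¹ := by
  have h : (0:ℝ) < v := by positivity
  positivity

lemma integrable_id_gauss {v : ℝ≥0} (hv : v ≠ 0) :
    Integrable (fun x => x) (gaussianReal 0 v) := by
  refine gauss_integrable' hv ?_
  rw [pdf_eq']
  have h := ((intA1' (hb_pos' hv)).const_mul (Real.sqrt (2 * π * v))⁻¹)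
  refine h.congr (ae_of_all _ fun x => ?_)
  ring

lemma integrable_sq_gauss {v : ℝ≥0} (hv : v ≠ 0) :
    Integrable (fun x : ℝ => x ^ 2) (gaussianReal 0 v) := by
  refine gauss_integrable' hv ?_
  rw [pdf_eq']
  have h := ((intA2' (hb_pos' hv)).const_mul (Real.sqrt (2 * π * v))⁻¹)
  refine h.congr (ae_of_all _ fun x => ?_)
  ring

lemma integral_id_gauss {v : ℝ≥0} (hv : v ≠ 0) : ∫ x, x ∂(gaussianReal 0 v) = 0 := by
  rw [gauss_int' hv, pdf_eq']
  have h : ∀ x : ℝ, (Real.sqrt (2 * π * v))⁻¹ * Real.exp (-(2 * (v:ℝ))⁻¹ * x ^ 2) * x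
      = (Real.sqrt (2 * π * v))⁻¹ * (x * Real.exp (-(2 * (v:ℝ))⁻¹ * x ^ 2)) := fun x => by ring
  simp_rw [h, integral_const_mul, valA3' (hb_pos' hv), mul_zero]

lemma integral_sq_gauss {v : ℝ≥0} (hv : v ≠ 0) : ∫ x, x ^ 2 ∂(gaussianReal 0 v) = v := by
  rw [gauss_int' hv, pdf_eq']
  have h : ∀ x : ℝ, (Real.sqrt (2 * π * v))⁻¹ * Real.exp (-(2 * (v:ℝ))⁻¹ * x ^ 2) * x ^ 2
      = (Real.sqrt (2 * π * v))⁻¹ * (x ^ 2 * Real.exp (-(2 * (v:ℝ))⁻¹ * x ^ 2)) := fun x => by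
    ring
  simp_rw [h, integral_const_mul, valA4' (hb_pos' hv)]
  have hv' : (0:ℝ) < v := by positivity
  have h1 : π / (2 * (v:ℝ))⁻¹ = 2 * π * v := by field_simp
  have h2 : 2 * (2 * (v:ℝ))⁻¹ = (v:ℝ)⁻¹ := by field_simp
  rw [h1, h2]
  have h3 : Real.sqrt (2 * π * v) ≠ 0 := by positivity
  field_simp

/- Part C : expectation of a squared coordinate -/

variable {Ω : Type*} [MeasurableSpace Ω] {P : Measure Ω} [IsProbabilityMeasure P]

lemma coord_sq_integrable {Y Z : Ω → ℝ} (c : ℝ)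
    (hY : Integrable Y P) (hZ : Integrable Z P)
    (hY2 : Integrable (fun ω => Y ω ^ 2) P) (hZ2 : Integrable (fun ω => Z ω ^ 2) P)
    (hYZ : Integrable (fun ω => Y ω * Z ω) P) :
    Integrable (fun ω => (c + Y ω - Z ω) ^ 2) P := by
  have h : (fun ω => (c + Y ω - Z ω) ^ 2) = fun ω =>
      c ^ 2 + Y ω ^ 2 + Z ω ^ 2 + (2 * c) * Y ω + (-2 * c) * Z ω + (-2) * (Y ω * Z ω) := by
    funext ω; ring
  rw [h]
  exact (((((integrable_const _).add hY2).add hZ2).add (hY.const_mul _)).add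
    (hZ.const_mul _)).add (hYZ.const_mul _)

lemma coord_sq_integral {Y Z : Ω → ℝ} (c : ℝ) {s : ℝ}
    (hY : Integrable Y P) (hZ : Integrable Z P)
    (hY2 : Integrable (fun ω => Y ω ^ 2) P) (hZ2 : Integrable (fun ω => Z ω ^ 2) P)
    (hYZ : Integrable (fun ω => Y ω * Z ω) P)
    (hIY : ∫ ω, Y ω ∂P = 0) (hIZ : ∫ ω, Z ω ∂P = 0)
    (hIYZ : ∫ ω, Y ω * Z ω ∂P = 0)
    (hIY2 : ∫ ω, Y ω ^ 2 ∂P = s) (hIZ2 : ∫ ω, Z ω ^ 2 ∂P = s) :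
    ∫ ω, (c + Y ω - Z ω) ^ 2 ∂P = c ^ 2 + 2 * s := by
  have h : (fun ω => (c + Y ω - Z ω) ^ 2) = fun ω =>
      c ^ 2 + Y ω ^ 2 + Z ω ^ 2 + (2 * c) * Y ω + (-2 * c) * Z ω + (-2) * (Y ω * Z ω) := by
    funext ω; ring
  rw [h]
  have I1 : Integrable (fun ω => c ^ 2 + Y ω ^ 2) P := (integrable_const _).add hY2
  have I2 : Integrable (fun ω => c ^ 2 + Y ω ^ 2 + Z ω ^ 2) P := I1.add hZ2
  have I3 : Integrable (fun ω => c ^ 2 + Y ω ^ 2 + Z ω ^ 2 + (2 * c) * Y ω) P :=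
    I2.add (hY.const_mul _)
  have I4 : Integrable (fun ω => c ^ 2 + Y ω ^ 2 + Z ω ^ 2 + (2 * c) * Y ω + (-2 * c) * Z ω) P :=
    I3.add (hZ.const_mul _)
  rw [integral_add I4 (hYZ.const_mul _), integral_add I3 (hZ.const_mul _),
    integral_add I2 (hY.const_mul _), integral_add I1 hZ2,
    integral_add (integrable_const _) hY2, integral_const,
    integral_const_mul, integral_const_mul, integral_const_mul,
    hIY, hIZ, hIYZ, hIY2, hIZ2]
  simp
  ring

end GaussAux

theorem stmt_13 {Ω : Type*} [MeasurableSpace Ω] (P : Measure Ω) [IsProbabilityMeasure P]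
    (p : ℕ) (hp : 1 ≤ p) (σ : ℝ) (hσ : 0 < σ) (n : ℕ) (hn : 2 ≤ n)
    (ε : Fin n → Ω → EuclideanSpace ℝ (Fin p))
    (hiid : IIDGaussianCoords P σ ε)
    (X θ : Fin n → EuclideanSpace ℝ (Fin p))
    (d : Fin n → Fin n → ℝ) (hd : ∀ i j : Fin n, i < j → 0 ≤ d i j) (a : ℝ) :
    ∫ ω, ∑ i : Fin n, ∑ j ∈ Finset.Ioi i,
        (d i j - a * ‖X i + θ i + ε i ω - X j - θ j - ε j ω‖) ^ 2 ∂P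
      = ∑ i : Fin n, ∑ j ∈ Finset.Ioi i,
          (d i j ^ 2
            + 2 * a ^ 2 * σ ^ 2
              * (p + (‖X i + θ i - X j - θ j‖ / (Real.sqrt 2 * σ)) ^ 2)
            - 2 * a * d i j
              * ∫ ω, ‖X i + θ i + ε i ω - X j - θ j - ε j ω‖ ∂P) := by
  obtain ⟨hmeas, hindep, hmap⟩ := hiid
  set v : ℝ≥0 := ⟨σ ^ 2, sq_nonneg σ⟩ with hv
  have hvne : v ≠ 0 := by
    intro h
    have h2 := congrArg NNReal.toReal h
    simp [hv] at h2
    exact hσ.ne' (pow_eq_zero_iff (n := 2) two_ne_zero |>.mp h2)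
  have hvcoe : (v : ℝ) = σ ^ 2 := rfl
  -- coordinate random variables
  have hYmeas : ∀ (i : Fin n) (k : Fin p), Measurable (fun ω => ε i ω k) :=
    fun i k => (measurable_pi_apply k).comp ((WithLp.measurable_ofLp _ _).comp (hmeas i))
  have hYint : ∀ (i : Fin n) (k : Fin p), Integrable (fun ω => ε i ω k) P := by
    intro i k
    have h := (integrable_map_measure aestronglyMeasurable_id (hYmeas i k).aemeasurable).mp
      (by rw [hmap i k]; exact integrable_id_gauss hvne)
    exact h
  have hYsqint : ∀ (i : Fin n) (k : Fin p), Integrable (fun ω => ε i ω k ^ 2) P := by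
    intro i k
    have hg : AEStronglyMeasurable (fun x : ℝ => x ^ 2)
        (Measure.map (fun ω => ε i ω k) P) :=
      (continuous_pow 2).aestronglyMeasurable
    have h := (integrable_map_measure hg (hYmeas i k).aemeasurable).mp
      (by rw [hmap i k]; exact integrable_sq_gauss hvne)
    exact h
  have hYval : ∀ (i : Fin n) (k : Fin p), ∫ ω, ε i ω k ∂P = 0 := by
    intro i k
    have h := integral_map (hYmeas i k).aemeasurable
      (aestronglyMeasurable_id (μ := Measure.map (fun ω => ε i ω k) P))
    rw [hmap i k] at h
    simpa [integral_id_gauss hvne] using h.symm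
  have hYsqval : ∀ (i : Fin n) (k : Fin p), ∫ ω, ε i ω k ^ 2 ∂P = σ ^ 2 := by
    intro i k
    have hg : AEStronglyMeasurable (fun x : ℝ => x ^ 2)
        (Measure.map (fun ω => ε i ω k) P) :=
      (continuous_pow 2).aestronglyMeasurable
    have h := integral_map (hYmeas i k).aemeasurable hg
    rw [hmap i k] at h
    rw [← hvcoe, ← integral_sq_gauss hvne]
    exact h.symm
  have hYindep : ∀ (i j : Fin n) (k : Fin p), i ≠ j →
      IndepFun (fun ω => ε i ω k) (fun ω => ε j ω k) P := by
    intro i j k hij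
    exact hindep.indepFun (i := (i, k)) (j := (j, k)) (by simp [hij])
  have hYZint : ∀ (i j : Fin n) (k : Fin p), i ≠ j →
      Integrable (fun ω => ε i ω k * ε j ω k) P := by
    intro i j k hij
    have h := (hYindep i j k hij).integrable_mul (hYint i k) (hYint j k)
    exact h
  have hYZval : ∀ (i j : Fin n) (k : Fin p), i ≠ j →
      ∫ ω, ε i ω k * ε j ω k ∂P = 0 := by
    intro i j k hij
    have h := (hYindep i j k hij).integral_fun_mul_eq_mul_integral (hYint i k).1 (hYint j k).1
    have h2 : ∫ ω, ε i ω k * ε j ω k ∂P = (∫ ω, ε i ω k ∂P) * ∫ ω, ε j ω k ∂P := h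
    rw [h2, hYval i k, zero_mul]
  -- norm-squared expansion
  have hnormsq : ∀ w : EuclideanSpace ℝ (Fin p), ‖w‖ ^ 2 = ∑ k, (w k) ^ 2 := by
    intro w
    rw [EuclideanSpace.norm_eq, Real.sq_sqrt (Finset.sum_nonneg fun k _ => by positivity)]
    simp [Real.norm_eq_abs, sq_abs]
  -- per-pair facts
  have key : ∀ i j : Fin n, i ≠ j →
      Integrable (fun ω => (d i j - a * ‖X i + θ i + ε i ω - X j - θ j - ε j ω‖) ^ 2) P ∧
      ∫ ω, (d i j - a * ‖X i + θ i + ε i ω - X j - θ j - ε j ω‖) ^ 2 ∂P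
        = d i j ^ 2
            + 2 * a ^ 2 * σ ^ 2
              * (p + (‖X i + θ i - X j - θ j‖ / (Real.sqrt 2 * σ)) ^ 2)
            - 2 * a * d i j
              * ∫ ω, ‖X i + θ i + ε i ω - X j - θ j - ε j ω‖ ∂P := by
    intro i j hij
    set c : EuclideanSpace ℝ (Fin p) := X i + θ i - X j - θ j with hc
    have hcoord : ∀ ω k, (X i + θ i + ε i ω - X j - θ j - ε j ω) k
        = c k + ε i ω k - ε j ω k := by
      intro ω k
      simp only [hc, PiLp.add_apply, PiLp.sub_apply]
      ring
    have hWsq : ∀ ω, ‖X i + θ i + ε i ω - X j - θ j - ε j ω‖ ^ 2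
        = ∑ k, (c k + ε i ω k - ε j ω k) ^ 2 := by
      intro ω
      rw [hnormsq]
      exact Finset.sum_congr rfl fun k _ => by rw [hcoord]
    have hA2int : Integrable
        (fun ω => ‖X i + θ i + ε i ω - X j - θ j - ε j ω‖ ^ 2) P := by
      have h : (fun ω => ‖X i + θ i + ε i ω - X j - θ j - ε j ω‖ ^ 2)
          = fun ω => ∑ k, (c k + ε i ω k - ε j ω k) ^ 2 := funext hWsq
      rw [h]
      exact integrable_finset_sum _ fun k _ =>
        coord_sq_integrable (c k) (hYint i k) (hYint j k) (hYsqint i k) (hYsqint j k)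
          (hYZint i j k hij)
    have hA2val : ∫ ω, ‖X i + θ i + ε i ω - X j - θ j - ε j ω‖ ^ 2 ∂P
        = ‖c‖ ^ 2 + 2 * σ ^ 2 * p := by
      have h : (fun ω => ‖X i + θ i + ε i ω - X j - θ j - ε j ω‖ ^ 2)
          = fun ω => ∑ k, (c k + ε i ω k - ε j ω k) ^ 2 := funext hWsq
      rw [h, integral_finset_sum _ fun k _ =>
        coord_sq_integrable (c k) (hYint i k) (hYint j k) (hYsqint i k) (hYsqint j k)
          (hYZint i j k hij)]
      have h2 : ∀ k : Fin p, ∫ ω, (c k + ε i ω k - ε j ω k) ^ 2 ∂P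
          = c k ^ 2 + 2 * σ ^ 2 := fun k =>
        coord_sq_integral (c k) (hYint i k) (hYint j k) (hYsqint i k) (hYsqint j k)
          (hYZint i j k hij) (hYval i k) (hYval j k) (hYZval i j k hij)
          (hYsqval i k) (hYsqval j k)
      rw [Finset.sum_congr rfl fun k _ => h2 k, Finset.sum_add_distrib, Finset.sum_const,
        hnormsq c]
      simp [mul_comm]
    have hAmeas : AEStronglyMeasurable
        (fun ω => ‖X i + θ i + ε i ω - X j - θ j - ε j ω‖) P := by
      have h : (fun ω => ‖X i + θ i + ε i ω - X j - θ j - ε j ω‖)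
          = fun ω => Real.sqrt (∑ k, (c k + ε i ω k - ε j ω k) ^ 2) := by
        funext ω
        rw [← Real.sqrt_sq (norm_nonneg _), hWsq ω]
      rw [h]
      refine (Measurable.sqrt ?_).aestronglyMeasurable
      refine Finset.measurable_sum _ fun k _ => ?_
      exact ((measurable_const.add (hYmeas i k)).sub (hYmeas j k)).pow_const 2
    have hAint : Integrable
        (fun ω => ‖X i + θ i + ε i ω - X j - θ j - ε j ω‖) P := by
      have hbound : Integrable
          (fun ω => 1 + ‖X i + θ i + ε i ω - X j - θ j - ε j ω‖ ^ 2) P :=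
        (integrable_const _).add hA2int
      refine Integrable.mono' hbound hAmeas (ae_of_all _ fun ω => ?_)
      rw [Real.norm_eq_abs, abs_of_nonneg (norm_nonneg _)]
      nlinarith [sq_nonneg (‖X i + θ i + ε i ω - X j - θ j - ε j ω‖ - 1)]
    have hsq_eq : (fun ω => (d i j - a * ‖X i + θ i + ε i ω - X j - θ j - ε j ω‖) ^ 2)
        = fun ω => (d i j ^ 2 + a ^ 2 * ‖X i + θ i + ε i ω - X j - θ j - ε j ω‖ ^ 2)
            - (2 * a * d i j) * ‖X i + θ i + ε i ω - X j - θ j - ε j ω‖ := by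
      funext ω; ring
    have hIntPair : Integrable
        (fun ω => (d i j - a * ‖X i + θ i + ε i ω - X j - θ j - ε j ω‖) ^ 2) P := by
      rw [hsq_eq]
      exact ((integrable_const _).add (hA2int.const_mul _)).sub (hAint.const_mul _)
    refine ⟨hIntPair, ?_⟩
    have hG1 : Integrable
        (fun ω => d i j ^ 2 + a ^ 2 * ‖X i + θ i + ε i ω - X j - θ j - ε j ω‖ ^ 2) P :=
      (integrable_const _).add (hA2int.const_mul _)
    have hG2 : Integrable
        (fun ω => (2 * a * d i j) * ‖X i + θ i + ε i ω - X j - θ j - ε j ω‖) P :=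
      hAint.const_mul _
    have hG3 : Integrable
        (fun ω => a ^ 2 * ‖X i + θ i + ε i ω - X j - θ j - ε j ω‖ ^ 2) P :=
      hA2int.const_mul _
    rw [hsq_eq, integral_sub hG1 hG2, integral_add (integrable_const _) hG3,
      integral_const, integral_const_mul, integral_const_mul, hA2val]
    have hs2 : (Real.sqrt 2 * σ) ^ 2 = 2 * σ ^ 2 := by
      rw [mul_pow, Real.sq_sqrt (by norm_num : (0:ℝ) ≤ 2)]
    have halg : a ^ 2 * (‖c‖ ^ 2 + 2 * σ ^ 2 * p)
        = 2 * a ^ 2 * σ ^ 2 * (p + (‖c‖ / (Real.sqrt 2 * σ)) ^ 2) := by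
      rw [div_pow, hs2]
      have hσ2 : (2 : ℝ) * σ ^ 2 ≠ 0 := by positivity
      field_simp
      ring
    simp only [probReal_univ, ENNReal.toReal_one, smul_eq_mul, one_mul]
    rw [halg]
  rw [integral_finset_sum _ fun i _ => integrable_finset_sum _
    fun j hj => (key i j (Finset.mem_Ioi.mp hj).ne).1]
  refine Finset.sum_congr rfl fun i _ => ?_
  rw [integral_finset_sum _ fun j hj => (key i j (Finset.mem_Ioi.mp hj).ne).1]
  exact Finset.sum_congr rfl fun j hj => (key i j (Finset.mem_Ioi.mp hj).ne).2
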